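/- Each second-level discrete-spline wavelet packet ψ_{[2],ρ} of order 2r has norm one, for each ρ ∈ {0,1,2,3} the four-sample shifts {ψ_{[2],ρ}[·−4l] : l = 0,…,N/4−1} are mutually orthogonal, and shifts of wavelet packets with different indices ρ ≠ ρ′ are orthogonal to each other; i.e. ⟨ψ_{[2],ρ}[·−4l], ψ_{[2],ρ′}[·−4p]⟩ = δ[ρ−ρ′]·δ[l−p]. -/

import Mathlib

open Finset

noncomputable def omegaN (N : ℕ) : ℂ := Complex.exp (2 * Real.pi * Complex.I / N)

noncomputable def U4r (N r : ℕ) (n : ℤ) : ℝ :=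
  ((Real.cos (Real.pi * n / N)) ^ (4 * r) + (Real.sin (Real.pi * n / N)) ^ (4 * r)) / 2

noncomputable def betaF (N r : ℕ) (n : ℤ) : ℂ :=
  Complex.ofReal ((Real.cos (Real.pi * n / N)) ^ (2 * r) / Real.sqrt (U4r N r n))

noncomputable def alphaF (N r : ℕ) (n : ℤ) : ℂ :=
  omegaN N ^ n * Complex.ofReal ((Real.sin (Real.pi * n / N)) ^ (2 * r) / Real.sqrt (U4r N r n))

noncomputable def psi0 (N r : ℕ) (k : ℤ) : ℂ :=
  (N : ℂ)⁻¹ * ∑ n ∈ Finset.range N, omegaN N ^ (k * (n : ℤ)) * betaF N r n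

noncomputable def psi1 (N r : ℕ) (k : ℤ) : ℂ :=
  (N : ℂ)⁻¹ * ∑ n ∈ Finset.range N, omegaN N ^ (k * (n : ℤ)) * alphaF N r n

noncomputable def ip (N : ℕ) (x y : ℤ → ℂ) : ℂ :=
  ∑ k ∈ Finset.range N, x k * (starRingEnd ℂ) (y k)

/-- DFTs of the second-level discrete-spline wavelet packets:
ψ̂₂,₀[n]=β[n]β[2n], ψ̂₂,₁[n]=β[n]α[2n], ψ̂₂,₂[n]=α[n]α[2n], ψ̂₂,₃[n]=α[n]β[2n]. -/
noncomputable def psi2hat (N r : ℕ) (ρ : Fin 4) (n : ℤ) : ℂ :=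
  if ρ.val = 0 then betaF N r n * betaF N r (2 * n)
  else if ρ.val = 1 then betaF N r n * alphaF N r (2 * n)
  else if ρ.val = 2 then alphaF N r n * alphaF N r (2 * n)
  else alphaF N r n * betaF N r (2 * n)

noncomputable def psi2 (N r : ℕ) (ρ : Fin 4) (k : ℤ) : ℂ :=
  (N : ℂ)⁻¹ * ∑ n ∈ Finset.range N, omegaN N ^ (k * (n : ℤ)) * psi2hat N r ρ n

lemma omegaN_ne_zero (N : ℕ) : omegaN N ≠ 0 := Complex.exp_ne_zero _

lemma omegaN_prim (N : ℕ) (hN : N ≠ 0) : IsPrimitiveRoot (omegaN N) N :=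
  Complex.isPrimitiveRoot_exp N hN

lemma omegaN_zpow_eq_one_iff (N : ℕ) (hN : N ≠ 0) (d : ℤ) :
    omegaN N ^ d = 1 ↔ (N : ℤ) ∣ d :=
  (omegaN_prim N hN).zpow_eq_one_iff_dvd d

lemma omegaN_pow_N (N : ℕ) (hN : N ≠ 0) : omegaN N ^ (N:ℤ) = 1 := by
  rw [omegaN_zpow_eq_one_iff N hN]

lemma conj_omegaN_zpow (N : ℕ) (d : ℤ) :
    (starRingEnd ℂ) (omegaN N ^ d) = omegaN N ^ (-d) := by
  have h : (starRingEnd ℂ) (omegaN N) = (omegaN N)⁻¹ := by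
    rw [omegaN, ← Complex.exp_conj, ← Complex.exp_neg]
    congr 1
    simp only [map_div₀, map_mul, Complex.conj_I, Complex.conj_ofReal, map_ofNat,
      Complex.conj_natCast]
    ring
  rw [map_zpow₀, h, inv_zpow, ← zpow_neg]

lemma geom_sum_omega (N : ℕ) (hN : N ≠ 0) (d : ℤ) :
    ∑ k ∈ Finset.range N, omegaN N ^ ((k : ℤ) * d) = if (N:ℤ) ∣ d then (N:ℂ) else 0 := by
  have hω := omegaN_ne_zero N
  have hterm : ∀ k : ℕ, omegaN N ^ ((k:ℤ) * d) = (omegaN N ^ d) ^ k := by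
    intro k
    rw [mul_comm, zpow_mul, zpow_natCast]
  by_cases h : (N:ℤ) ∣ d
  · simp only [hterm, (omegaN_zpow_eq_one_iff N hN d).2 h, one_pow, sum_const, card_range,
      nsmul_eq_mul, mul_one, if_pos h]
  · rw [if_neg h]
    have hx : omegaN N ^ d ≠ 1 := fun hh => h ((omegaN_zpow_eq_one_iff N hN d).1 hh)
    simp only [hterm]
    rw [geom_sum_eq hx]
    have : (omegaN N ^ d) ^ N = 1 := by
      rw [← zpow_natCast, ← zpow_mul, mul_comm, zpow_mul, omegaN_pow_N N hN, one_zpow]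
    rw [this, sub_self, zero_div]

lemma parseval (N : ℕ) (hN : N ≠ 0) (A B : ℤ → ℂ) (a b : ℤ) :
    ∑ k ∈ Finset.range N,
      (((N:ℂ)⁻¹ * ∑ n ∈ Finset.range N, omegaN N ^ (((k:ℤ)+a) * (n:ℤ)) * A n) *
        (starRingEnd ℂ) ((N:ℂ)⁻¹ * ∑ m ∈ Finset.range N, omegaN N ^ (((k:ℤ)+b) * (m:ℤ)) * B m))
    = (N:ℂ)⁻¹ * ∑ n ∈ Finset.range N,
        omegaN N ^ ((a - b) * (n:ℤ)) * (A n * (starRingEnd ℂ) (B n)) := by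
  have hω := omegaN_ne_zero N
  have hNC : (N:ℂ) ≠ 0 := Nat.cast_ne_zero.mpr hN
  set C : ℕ → ℕ → ℂ := fun n m =>
    (N:ℂ)⁻¹ * (N:ℂ)⁻¹ * (omegaN N ^ (a*(n:ℤ) - b*(m:ℤ)) * (A n * (starRingEnd ℂ) (B m)))
    with hC
  calc
    ∑ k ∈ Finset.range N,
      (((N:ℂ)⁻¹ * ∑ n ∈ Finset.range N, omegaN N ^ (((k:ℤ)+a) * (n:ℤ)) * A n) *
        (starRingEnd ℂ) ((N:ℂ)⁻¹ * ∑ m ∈ Finset.range N, omegaN N ^ (((k:ℤ)+b) * (m:ℤ)) * B m))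
        = ∑ k ∈ Finset.range N, ∑ n ∈ Finset.range N, ∑ m ∈ Finset.range N,
            C n m * omegaN N ^ ((k:ℤ)*((n:ℤ)-(m:ℤ))) := by
      refine sum_congr rfl fun k _ => ?_
      rw [map_mul, map_sum]
      have hconjN : (starRingEnd ℂ) ((N:ℂ)⁻¹) = (N:ℂ)⁻¹ := by simp
      rw [hconjN, mul_mul_mul_comm, sum_mul_sum, mul_sum]
      refine sum_congr rfl fun n _ => ?_
      rw [mul_sum]
      refine sum_congr rfl fun m _ => ?_
      rw [map_mul, conj_omegaN_zpow]
      have hsplit : omegaN N ^ (((k:ℤ)+a) * (n:ℤ)) * omegaN N ^ (-(((k:ℤ)+b) * (m:ℤ)))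
          = omegaN N ^ (a*(n:ℤ) - b*(m:ℤ)) * omegaN N ^ ((k:ℤ)*((n:ℤ)-(m:ℤ))) := by
        rw [← zpow_add₀ hω, ← zpow_add₀ hω]; congr 1; ring
      rw [hC]
      linear_combination ((N:ℂ)⁻¹ * (N:ℂ)⁻¹ * A n * (starRingEnd ℂ) (B m)) * hsplit
    _ = ∑ n ∈ Finset.range N, ∑ m ∈ Finset.range N,
          C n m * (if (N:ℤ) ∣ ((n:ℤ)-(m:ℤ)) then (N:ℂ) else 0) := by
      rw [Finset.sum_comm]
      refine sum_congr rfl fun n _ => ?_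
      rw [Finset.sum_comm]
      refine sum_congr rfl fun m _ => ?_
      rw [← Finset.mul_sum, geom_sum_omega N hN]
    _ = (N:ℂ)⁻¹ * ∑ n ∈ Finset.range N,
        omegaN N ^ ((a - b) * (n:ℤ)) * (A n * (starRingEnd ℂ) (B n)) := by
      rw [Finset.mul_sum]
      refine sum_congr rfl fun n hn => ?_
      rw [Finset.sum_eq_single n]
      · rw [if_pos (by simp)]
        simp only [hC]
        have h0 : a*(n:ℤ) - b*(n:ℤ) = (a-b)*(n:ℤ) := by ring
        rw [h0]
        field_simp
      · intro m hm hmn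
        rw [if_neg, mul_zero]
        intro hdvd
        have h1 : m < N := Finset.mem_range.mp hm
        have h2 : n < N := Finset.mem_range.mp hn
        have := Int.eq_zero_of_abs_lt_dvd hdvd (by
          rw [abs_lt]; constructor <;> [skip; skip] <;> omega)
        omega
      · intro h; exact (h hn).elim

lemma U4r_pos (N r : ℕ) (hr : 1 ≤ r) (n : ℤ) : 0 < U4r N r n := by
  unfold U4r
  set c := Real.cos (Real.pi * n / N) with hc
  set s := Real.sin (Real.pi * n / N) with hs
  have hp : s^2 + c^2 = 1 := Real.sin_sq_add_cos_sq _
  have hc4 : c^(4*r) = (c^2)^(2*r) := by rw [← pow_mul]; congr 1; ring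
  have hs4 : s^(4*r) = (s^2)^(2*r) := by rw [← pow_mul]; congr 1; ring
  by_cases h : c = 0
  · have hs2 : s^2 = 1 := by nlinarith
    rw [hc4, hs4, h, hs2]
    have : ((0:ℝ)^2)^(2*r) = 0 := by
      rw [zero_pow (by omega), zero_pow (by omega)]
    rw [this, one_pow]
    norm_num
  · have h1 : 0 < (c^2)^(2*r) := pow_pos (by positivity) _
    have h2 : 0 ≤ (s^2)^(2*r) := by positivity
    rw [hc4, hs4]; linarith

lemma xy_sq (N r : ℕ) (hr : 1 ≤ r) (n : ℤ) :
    ((Real.cos (Real.pi * n / N))^(2*r) / Real.sqrt (U4r N r n))^2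
    + ((Real.sin (Real.pi * n / N))^(2*r) / Real.sqrt (U4r N r n))^2 = 2 := by
  have hU := U4r_pos N r hr n
  rw [div_pow, div_pow, Real.sq_sqrt hU.le, ← pow_mul, ← pow_mul,
    show 2*r*2 = 4*r from by ring, ← add_div]
  rw [show U4r N r n = ((Real.cos (Real.pi * n / N))^(4*r)
      + (Real.sin (Real.pi * n / N))^(4*r))/2 from rfl] at hU ⊢
  set A := (Real.cos (Real.pi * n / N))^(4*r) + (Real.sin (Real.pi * n / N))^(4*r) with hA
  have hA0 : A ≠ 0 := by intro h; rw [h] at hU; norm_num at hU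
  rw [div_div_eq_mul_div, mul_comm, mul_div_assoc, div_self hA0, mul_one]

lemma arg_shift (N : ℕ) (hN : N ≠ 0) (M2 n : ℤ) (hM2 : 2*M2 = (N:ℤ)) :
    Real.pi * ((n + M2 : ℤ):ℝ) / N = Real.pi * (n:ℝ)/N + Real.pi/2 := by
  have hNR : (N:ℝ) ≠ 0 := Nat.cast_ne_zero.mpr hN
  have h2 : (2:ℝ) * (M2:ℝ) = (N:ℝ) := by exact_mod_cast congrArg (fun x : ℤ => (x:ℝ)) hM2
  push_cast
  rw [div_add_div _ _ hNR two_ne_zero, div_eq_div_iff hNR (mul_ne_zero hNR two_ne_zero)]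
  linear_combination Real.pi * (N:ℝ) * h2

lemma arg_per (N : ℕ) (hN : N ≠ 0) (n : ℤ) :
    Real.pi * ((n + (N:ℤ) : ℤ):ℝ) / N = Real.pi * (n:ℝ)/N + Real.pi := by
  have hNR : (N:ℝ) ≠ 0 := Nat.cast_ne_zero.mpr hN
  push_cast
  field_simp

lemma U4r_shift (N r : ℕ) (hN : N ≠ 0) (M2 n : ℤ) (hM2 : 2*M2 = (N:ℤ)) :
    U4r N r (n + M2) = U4r N r n := by
  unfold U4r
  rw [arg_shift N hN M2 n hM2, Real.cos_add_pi_div_two, Real.sin_add_pi_div_two,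
    Even.neg_pow ⟨2*r, by ring⟩]
  ring

lemma U4r_per (N r : ℕ) (hN : N ≠ 0) (n : ℤ) : U4r N r (n + (N:ℤ)) = U4r N r n := by
  unfold U4r
  rw [arg_per N hN n, Real.cos_add_pi, Real.sin_add_pi,
    Even.neg_pow ⟨2*r, by ring⟩, Even.neg_pow ⟨2*r, by ring⟩]

lemma betaF_shift (N r : ℕ) (hN : N ≠ 0) (M2 n : ℤ) (hM2 : 2*M2 = (N:ℤ)) :
    betaF N r (n + M2)
      = Complex.ofReal ((Real.sin (Real.pi * n / N))^(2*r) / Real.sqrt (U4r N r n)) := by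
  unfold betaF
  rw [arg_shift N hN M2 n hM2, Real.cos_add_pi_div_two, U4r_shift N r hN M2 n hM2,
    Even.neg_pow ⟨r, by ring⟩]

lemma omegaN_half (N : ℕ) (hN : N ≠ 0) (M2 : ℤ) (hM2 : 2*M2 = (N:ℤ)) :
    omegaN N ^ M2 = -1 := by
  have hNC : (N:ℂ) ≠ 0 := Nat.cast_ne_zero.mpr hN
  have h2 : (2:ℂ) * (M2:ℂ) = (N:ℂ) := by exact_mod_cast congrArg (fun x : ℤ => (x:ℂ)) hM2
  rw [omegaN, ← Complex.exp_int_mul]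
  rw [show (M2:ℂ) * (2 * Real.pi * Complex.I / N) = Real.pi * Complex.I from by
    rw [mul_div_assoc', div_eq_iff hNC]; linear_combination Real.pi * Complex.I * h2]
  exact Complex.exp_pi_mul_I

lemma alphaF_shift (N r : ℕ) (hN : N ≠ 0) (M2 n : ℤ) (hM2 : 2*M2 = (N:ℤ)) :
    alphaF N r (n + M2)
      = -(omegaN N ^ n
          * Complex.ofReal ((Real.cos (Real.pi * n / N))^(2*r) / Real.sqrt (U4r N r n))) := by
  unfold alphaF
  rw [arg_shift N hN M2 n hM2, Real.sin_add_pi_div_two, U4r_shift N r hN M2 n hM2,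
    zpow_add₀ (omegaN_ne_zero N), omegaN_half N hN M2 hM2]
  ring

lemma omegaN_pow_N' (N : ℕ) (hN : N ≠ 0) : omegaN N ^ (N:ℤ) = 1 := by
  have h : IsPrimitiveRoot (omegaN N) N := Complex.isPrimitiveRoot_exp N hN
  exact (h.zpow_eq_one_iff_dvd (N:ℤ)).2 dvd_rfl

lemma betaF_per (N r : ℕ) (hN : N ≠ 0) (n : ℤ) : betaF N r (n + (N:ℤ)) = betaF N r n := by
  unfold betaF
  rw [arg_per N hN n, Real.cos_add_pi, U4r_per N r hN n, Even.neg_pow ⟨r, by ring⟩]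

lemma alphaF_per (N r : ℕ) (hN : N ≠ 0) (n : ℤ) : alphaF N r (n + (N:ℤ)) = alphaF N r n := by
  unfold alphaF
  rw [arg_per N hN n, Real.sin_add_pi, U4r_per N r hN n, Even.neg_pow ⟨r, by ring⟩,
    zpow_add₀ (omegaN_ne_zero N), omegaN_pow_N' N hN, mul_one]

lemma xy_sq_C (N r : ℕ) (hr : 1 ≤ r) (n : ℤ) :
    (Complex.ofReal ((Real.cos (Real.pi * n / N))^(2*r) / Real.sqrt (U4r N r n)))
      * (Complex.ofReal ((Real.cos (Real.pi * n / N))^(2*r) / Real.sqrt (U4r N r n)))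
    + (Complex.ofReal ((Real.sin (Real.pi * n / N))^(2*r) / Real.sqrt (U4r N r n)))
      * (Complex.ofReal ((Real.sin (Real.pi * n / N))^(2*r) / Real.sqrt (U4r N r n))) = 2 := by
  have h := xy_sq N r hr n
  rw [← Complex.ofReal_mul, ← Complex.ofReal_mul, ← Complex.ofReal_add]
  have h2 : ((Real.cos (Real.pi * n / N))^(2*r) / Real.sqrt (U4r N r n))
      * ((Real.cos (Real.pi * n / N))^(2*r) / Real.sqrt (U4r N r n))
      + ((Real.sin (Real.pi * n / N))^(2*r) / Real.sqrt (U4r N r n))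
      * ((Real.sin (Real.pi * n / N))^(2*r) / Real.sqrt (U4r N r n)) = 2 := by
    linear_combination h
  rw [h2]
  norm_num

lemma pair_bb (N r : ℕ) (hr : 1 ≤ r) (hN : N ≠ 0) (M2 : ℤ) (hM2 : 2*M2 = (N:ℤ)) (n : ℤ) :
    betaF N r n * (starRingEnd ℂ) (betaF N r n)
      + betaF N r (n+M2) * (starRingEnd ℂ) (betaF N r (n+M2)) = 2 := by
  rw [betaF_shift N r hN M2 n hM2]
  unfold betaF
  rw [Complex.conj_ofReal, Complex.conj_ofReal]
  linear_combination xy_sq_C N r hr n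

lemma pair_aa (N r : ℕ) (hr : 1 ≤ r) (hN : N ≠ 0) (M2 : ℤ) (hM2 : 2*M2 = (N:ℤ)) (n : ℤ) :
    alphaF N r n * (starRingEnd ℂ) (alphaF N r n)
      + alphaF N r (n+M2) * (starRingEnd ℂ) (alphaF N r (n+M2)) = 2 := by
  rw [alphaF_shift N r hN M2 n hM2]
  unfold alphaF
  rw [map_neg, map_mul, map_mul, Complex.conj_ofReal, Complex.conj_ofReal,
    conj_omegaN_zpow]
  have hω : omegaN N ^ n * omegaN N ^ (-n) = 1 := by
    rw [← zpow_add₀ (omegaN_ne_zero N)]; simp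
  have h2 := xy_sq_C N r hr n
  linear_combination ((Real.cos (Real.pi * n / N))^(2*r) / Real.sqrt (U4r N r n) : ℝ)
      * ((Real.cos (Real.pi * n / N))^(2*r) / Real.sqrt (U4r N r n) : ℝ) * hω
    + ((Real.sin (Real.pi * n / N))^(2*r) / Real.sqrt (U4r N r n) : ℝ)
      * ((Real.sin (Real.pi * n / N))^(2*r) / Real.sqrt (U4r N r n) : ℝ) * hω + h2

lemma pair_ba (N r : ℕ) (hr : 1 ≤ r) (hN : N ≠ 0) (M2 : ℤ) (hM2 : 2*M2 = (N:ℤ)) (n : ℤ) :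
    betaF N r n * (starRingEnd ℂ) (alphaF N r n)
      + betaF N r (n+M2) * (starRingEnd ℂ) (alphaF N r (n+M2)) = 0 := by
  rw [alphaF_shift N r hN M2 n hM2, betaF_shift N r hN M2 n hM2]
  unfold alphaF betaF
  rw [map_neg, map_mul, map_mul, Complex.conj_ofReal, Complex.conj_ofReal,
    conj_omegaN_zpow]
  ring

lemma pair_ab (N r : ℕ) (hr : 1 ≤ r) (hN : N ≠ 0) (M2 : ℤ) (hM2 : 2*M2 = (N:ℤ)) (n : ℤ) :
    alphaF N r n * (starRingEnd ℂ) (betaF N r n)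
      + alphaF N r (n+M2) * (starRingEnd ℂ) (betaF N r (n+M2)) = 0 := by
  rw [alphaF_shift N r hN M2 n hM2, betaF_shift N r hN M2 n hM2]
  unfold alphaF betaF
  rw [Complex.conj_ofReal, Complex.conj_ofReal]
  ring

lemma quad_master (F F' G G' : ℤ → ℂ) (M M2 : ℤ) (hMM : M2 = 2*M) (v w : ℂ)
    (hper : ∀ m, G (m + 2*M2) = G m) (hper' : ∀ m, G' (m + 2*M2) = G' m)
    (h1 : ∀ m, F m * (starRingEnd ℂ) (F' m)
      + F (m+M2) * (starRingEnd ℂ) (F' (m+M2)) = v)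
    (h3 : ∀ m, G m * (starRingEnd ℂ) (G' m)
      + G (m+M2) * (starRingEnd ℂ) (G' (m+M2)) = w)
    (n : ℤ) :
    F n * G (2*n) * ((starRingEnd ℂ) (F' n) * (starRingEnd ℂ) (G' (2*n)))
    + F (n+M) * G (2*(n+M)) * ((starRingEnd ℂ) (F' (n+M)) * (starRingEnd ℂ) (G' (2*(n+M))))
    + F (n+2*M) * G (2*(n+2*M)) * ((starRingEnd ℂ) (F' (n+2*M)) * (starRingEnd ℂ) (G' (2*(n+2*M))))
    + F (n+3*M) * G (2*(n+3*M)) * ((starRingEnd ℂ) (F' (n+3*M)) * (starRingEnd ℂ) (G' (2*(n+3*M))))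
    = v * w := by
  have e1 : 2*(n+M) = 2*n + M2 := by rw [hMM]; ring
  have e2 : 2*(n+2*M) = (2*n) + 2*M2 := by rw [hMM]; ring
  have e3 : 2*(n+3*M) = (2*n+M2) + 2*M2 := by rw [hMM]; ring
  have e4 : n+2*M = n + M2 := by rw [hMM]
  have e5 : n+3*M = (n+M) + M2 := by rw [hMM]; ring
  rw [e1, e2, e3, e4, e5, hper, hper, hper', hper']
  linear_combination (G (2*n) * (starRingEnd ℂ) (G' (2*n))) * h1 n
    + (G (2*n+M2) * (starRingEnd ℂ) (G' (2*n+M2))) * h1 (n+M)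
    + v * h3 (2*n)

lemma quad_sum (N r : ℕ) (hr : 1 ≤ r) (M : ℕ) (hM : M ≠ 0) (hNM : N = 4*M)
    (ρ ρ' : Fin 4) (n : ℤ) :
    psi2hat N r ρ n * (starRingEnd ℂ) (psi2hat N r ρ' n)
    + psi2hat N r ρ (n + (M:ℤ)) * (starRingEnd ℂ) (psi2hat N r ρ' (n + (M:ℤ)))
    + psi2hat N r ρ (n + 2*(M:ℤ)) * (starRingEnd ℂ) (psi2hat N r ρ' (n + 2*(M:ℤ)))
    + psi2hat N r ρ (n + 3*(M:ℤ)) * (starRingEnd ℂ) (psi2hat N r ρ' (n + 3*(M:ℤ)))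
    = if ρ = ρ' then 4 else 0 := by
  have hN : N ≠ 0 := by omega
  set M2 : ℤ := 2*(M:ℤ) with hMM
  have hM2 : 2*M2 = (N:ℤ) := by rw [hMM, hNM]; push_cast; ring
  have hperb : ∀ m:ℤ, betaF N r (m + 2*M2) = betaF N r m := by
    intro m; rw [hM2]; exact betaF_per N r hN m
  have hpera : ∀ m:ℤ, alphaF N r (m + 2*M2) = alphaF N r m := by
    intro m; rw [hM2]; exact alphaF_per N r hN m
  have hbb := pair_bb N r hr hN M2 hM2
  have haa := pair_aa N r hr hN M2 hM2
  have hba := pair_ba N r hr hN M2 hM2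
  have hab := pair_ab N r hr hN M2 hM2
  fin_cases ρ <;> fin_cases ρ' <;>
    simp only [psi2hat, Fin.isValue] <;>
    norm_num [Fin.ext_iff, map_mul]
  · linear_combination quad_master (betaF N r) (betaF N r) (betaF N r) (betaF N r) (M:ℤ) M2 hMM _ _ hperb hperb (hbb) (hbb) n
  · linear_combination quad_master (betaF N r) (betaF N r) (betaF N r) (alphaF N r) (M:ℤ) M2 hMM _ _ hperb hpera (hbb) (hba) n
  · linear_combination quad_master (betaF N r) (alphaF N r) (betaF N r) (alphaF N r) (M:ℤ) M2 hMM _ _ hperb hpera (hba) (hba) n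
  · linear_combination quad_master (betaF N r) (alphaF N r) (betaF N r) (betaF N r) (M:ℤ) M2 hMM _ _ hperb hperb (hba) (hbb) n
  · linear_combination quad_master (betaF N r) (betaF N r) (alphaF N r) (betaF N r) (M:ℤ) M2 hMM _ _ hpera hperb (hbb) (hab) n
  · linear_combination quad_master (betaF N r) (betaF N r) (alphaF N r) (alphaF N r) (M:ℤ) M2 hMM _ _ hpera hpera (hbb) (haa) n
  · linear_combination quad_master (betaF N r) (alphaF N r) (alphaF N r) (alphaF N r) (M:ℤ) M2 hMM _ _ hpera hpera (hba) (haa) n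
  · linear_combination quad_master (betaF N r) (alphaF N r) (alphaF N r) (betaF N r) (M:ℤ) M2 hMM _ _ hpera hperb (hba) (hab) n
  · linear_combination quad_master (alphaF N r) (betaF N r) (alphaF N r) (betaF N r) (M:ℤ) M2 hMM _ _ hpera hperb (hab) (hab) n
  · linear_combination quad_master (alphaF N r) (betaF N r) (alphaF N r) (alphaF N r) (M:ℤ) M2 hMM _ _ hpera hpera (hab) (haa) n
  · linear_combination quad_master (alphaF N r) (alphaF N r) (alphaF N r) (alphaF N r) (M:ℤ) M2 hMM _ _ hpera hpera (haa) (haa) n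
  · linear_combination quad_master (alphaF N r) (alphaF N r) (alphaF N r) (betaF N r) (M:ℤ) M2 hMM _ _ hpera hperb (haa) (hab) n
  · linear_combination quad_master (alphaF N r) (betaF N r) (betaF N r) (betaF N r) (M:ℤ) M2 hMM _ _ hperb hperb (hab) (hbb) n
  · linear_combination quad_master (alphaF N r) (betaF N r) (betaF N r) (alphaF N r) (M:ℤ) M2 hMM _ _ hperb hpera (hab) (hba) n
  · linear_combination quad_master (alphaF N r) (alphaF N r) (betaF N r) (alphaF N r) (M:ℤ) M2 hMM _ _ hperb hpera (haa) (hba) n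
  · linear_combination quad_master (alphaF N r) (alphaF N r) (betaF N r) (betaF N r) (M:ℤ) M2 hMM _ _ hperb hperb (haa) (hbb) n

lemma omegaN_four (N M : ℕ) (hM : M ≠ 0) (hNM : N = 4*M) :
    omegaN N ^ (4:ℤ) = omegaN M := by
  have hMC : (M:ℂ) ≠ 0 := Nat.cast_ne_zero.mpr hM
  have hNC : (N:ℂ) = 4*(M:ℂ) := by rw [hNM]; push_cast; ring
  have h : omegaN N ^ (4:ℕ) = omegaN M := by
    rw [omegaN, omegaN, ← Complex.exp_nat_mul]
    congr 1
    rw [hNC]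
    field_simp
    ring
  rw [show (4:ℤ) = ((4:ℕ):ℤ) from rfl, zpow_natCast, h]

/-- Each second-level wavelet packet has norm one, its four-sample shifts are
mutually orthogonal, and shifts of packets with different indices are orthogonal:
⟨ψ₂,ρ[·−4l], ψ₂,ρ′[·−4p]⟩ = δ[ρ−ρ′]δ[l−p]. -/
theorem stmt_3 (j r : ℕ) (hj : 3 ≤ j) (hr : 1 ≤ r) (N : ℕ) (hN : N = 2 ^ j)
    (ρ ρ' : Fin 4) (l p : ℕ) (hl : l < N / 4) (hp : p < N / 4) :
    ip N (fun k => psi2 N r ρ (k - 4 * (l : ℤ))) (fun k => psi2 N r ρ' (k - 4 * (p : ℤ))) =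
      if ρ = ρ' ∧ l = p then 1 else 0 := by
  have h2j : (2:ℕ)^j = 4 * 2^(j-2) := by
    rw [show j = 2+(j-2) from by omega, pow_add]; norm_num
  obtain ⟨M, hNM, hM0⟩ : ∃ M, N = 4*M ∧ M ≠ 0 :=
    ⟨2^(j-2), by omega, pow_ne_zero _ two_ne_zero⟩
  have hN0 : N ≠ 0 := by omega
  have hl' : l < M := by omega
  have hp' : p < M := by omega
  have hω := omegaN_ne_zero N
  have step1 : ip N (fun k => psi2 N r ρ ((k:ℤ) - 4*(l:ℤ))) (fun k => psi2 N r ρ' ((k:ℤ) - 4*(p:ℤ)))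
      = (N:ℂ)⁻¹ * ∑ n ∈ Finset.range N,
          omegaN N ^ ((-(4*(l:ℤ)) - -(4*(p:ℤ))) * (n:ℤ))
            * (psi2hat N r ρ n * (starRingEnd ℂ) (psi2hat N r ρ' n)) := by
    unfold ip psi2
    simp only [sub_eq_add_neg]
    exact parseval N hN0 (psi2hat N r ρ) (psi2hat N r ρ') (-(4*(l:ℤ))) (-(4*(p:ℤ)))
  set q : ℤ := (p:ℤ) - (l:ℤ) with hq
  have hexp : (-(4*(l:ℤ)) - -(4*(p:ℤ))) = 4*q := by rw [hq]; ring
  rw [step1, hexp]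
  have hsplit : ∀ f : ℕ → ℂ, ∑ n ∈ Finset.range N, f n
      = ∑ s ∈ Finset.range M, (f s + f (M+s) + f (M+M+s) + f (M+M+M+s)) := by
    intro f
    rw [show N = M+M+M+M from by omega, Finset.sum_range_add, Finset.sum_range_add,
      Finset.sum_range_add, ← Finset.sum_add_distrib, ← Finset.sum_add_distrib,
      ← Finset.sum_add_distrib]
  rw [hsplit]
  have hqN : ∀ t:ℤ, omegaN N ^ ((N:ℤ)*t) = 1 := fun t => by
    rw [zpow_mul, omegaN_pow_N N hN0, one_zpow]
  have hterm : ∀ s : ℕ,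
      omegaN N ^ (4*q*((s:ℕ):ℤ)) * (psi2hat N r ρ (s:ℤ) * (starRingEnd ℂ) (psi2hat N r ρ' (s:ℤ)))
      + omegaN N ^ (4*q*((M+s:ℕ):ℤ)) * (psi2hat N r ρ ((M+s:ℕ):ℤ) * (starRingEnd ℂ) (psi2hat N r ρ' ((M+s:ℕ):ℤ)))
      + omegaN N ^ (4*q*((M+M+s:ℕ):ℤ)) * (psi2hat N r ρ ((M+M+s:ℕ):ℤ) * (starRingEnd ℂ) (psi2hat N r ρ' ((M+M+s:ℕ):ℤ)))
      + omegaN N ^ (4*q*((M+M+M+s:ℕ):ℤ)) * (psi2hat N r ρ ((M+M+M+s:ℕ):ℤ) * (starRingEnd ℂ) (psi2hat N r ρ' ((M+M+M+s:ℕ):ℤ)))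
      = omegaN N ^ (4*q*((s:ℕ):ℤ)) * (if ρ = ρ' then 4 else 0) := by
    intro s
    have c1 : ((M+s:ℕ):ℤ) = (s:ℤ) + (M:ℤ) := by push_cast; ring
    have c2 : ((M+M+s:ℕ):ℤ) = (s:ℤ) + 2*(M:ℤ) := by push_cast; ring
    have c3 : ((M+M+M+s:ℕ):ℤ) = (s:ℤ) + 3*(M:ℤ) := by push_cast; ring
    have w1 : omegaN N ^ (4*q*((s:ℤ)+(M:ℤ))) = omegaN N ^ (4*q*(s:ℤ)) := by
      rw [show 4*q*((s:ℤ)+(M:ℤ)) = 4*q*(s:ℤ) + (N:ℤ)*q from by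
        rw [show ((N:ℕ):ℤ) = 4*(M:ℤ) from by rw [hNM]; push_cast; ring]; ring,
        zpow_add₀ hω, hqN, mul_one]
    have w2 : omegaN N ^ (4*q*((s:ℤ)+2*(M:ℤ))) = omegaN N ^ (4*q*(s:ℤ)) := by
      rw [show 4*q*((s:ℤ)+2*(M:ℤ)) = 4*q*(s:ℤ) + (N:ℤ)*(2*q) from by
        rw [show ((N:ℕ):ℤ) = 4*(M:ℤ) from by rw [hNM]; push_cast; ring]; ring,
        zpow_add₀ hω, hqN, mul_one]
    have w3 : omegaN N ^ (4*q*((s:ℤ)+3*(M:ℤ))) = omegaN N ^ (4*q*(s:ℤ)) := by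
      rw [show 4*q*((s:ℤ)+3*(M:ℤ)) = 4*q*(s:ℤ) + (N:ℤ)*(3*q) from by
        rw [show ((N:ℕ):ℤ) = 4*(M:ℤ) from by rw [hNM]; push_cast; ring]; ring,
        zpow_add₀ hω, hqN, mul_one]
    rw [c1, c2, c3, w1, w2, w3, ← mul_add, ← mul_add, ← mul_add,
      quad_sum N r hr M hM0 hNM ρ ρ' (s:ℤ)]
  rw [Finset.sum_congr rfl (fun s _ => hterm s), ← Finset.sum_mul]
  have hgeo : ∑ s ∈ Finset.range M, omegaN N ^ (4*q*((s:ℕ):ℤ))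
      = if (M:ℤ) ∣ q then (M:ℂ) else 0 := by
    have h4 : omegaN N ^ (4:ℤ) = omegaN M := omegaN_four N M hM0 hNM
    calc ∑ s ∈ Finset.range M, omegaN N ^ (4*q*((s:ℕ):ℤ))
        = ∑ s ∈ Finset.range M, omegaN M ^ (((s:ℕ):ℤ)*q) := by
          refine Finset.sum_congr rfl fun s _ => ?_
          rw [show 4*q*((s:ℕ):ℤ) = 4*(((s:ℕ):ℤ)*q) from by ring, zpow_mul, h4]
      _ = _ := geom_sum_omega M hM0 q
  rw [hgeo]
  by_cases hρ : ρ = ρ'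
  · by_cases hlp : l = p
    · have hq0 : q = 0 := by omega
      have hd : (M:ℤ) ∣ q := hq0 ▸ dvd_zero _
      rw [if_pos hd, if_pos hρ, if_pos (show ρ = ρ' ∧ l = p from ⟨hρ, hlp⟩)]
      have hNC : (N:ℂ) = 4*(M:ℂ) := by rw [hNM]; push_cast; ring
      have hMC : (M:ℂ) ≠ 0 := Nat.cast_ne_zero.mpr hM0
      rw [hNC]
      field_simp
    · have hnd : ¬ (M:ℤ) ∣ q := by
        intro hd
        have h0 : q = 0 := Int.eq_zero_of_abs_lt_dvd hd (by rw [abs_lt]; omega)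
        omega
      rw [if_neg hnd, if_neg (show ¬(ρ = ρ' ∧ l = p) from fun h => hlp h.2), zero_mul, mul_zero]
  · rw [if_neg hρ, if_neg (show ¬(ρ = ρ' ∧ l = p) from fun h => hρ h.1), mul_zero, mul_zero]
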